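/- Let Λ be a full-rank lattice in ℝ^d with Voronoi cell Ω, packing radius ρ, covering radius R, and let Δ be the closed ball of radius ω₀ > 0. Then vol(Δ \ Ω) = max{0, vol(Δ) − vol(Ω)} if and only if ω₀ ≤ ρ or ω₀ ≥ R. -/

import Mathlib

open MeasureTheory Submodule RealInnerProductSpace Set

private lemma voronoi_halfspace_iff {E : Type*} [NormedAddCommGroup E] [InnerProductSpace ℝ E]
    (ω l : E) : ‖ω‖ ≤ ‖ω - l‖ ↔ 2 * ⟪ω, l⟫ ≤ ‖l‖ ^ 2 := by
  have h := norm_sub_sq_real ω l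
  constructor
  · intro h1
    have := pow_le_pow_left₀ (norm_nonneg ω) h1 2
    linarith
  · intro h1
    nlinarith [norm_nonneg ω, norm_nonneg (ω - l)]

private lemma lattice_discrete (d : ℕ) (b : Module.Basis (Fin d) ℝ (EuclideanSpace ℝ (Fin d))) :
    ∃ ε > (0:ℝ), ∀ x ∈ span ℤ (Set.range b), ‖x‖ < ε → x = 0 := by
  have h0 : IsOpen ({0} : Set (span ℤ (Set.range b))) := isOpen_discrete _
  rw [isOpen_induced_iff] at h0
  obtain ⟨t, ht, hpre⟩ := h0
  have h0t : (0 : EuclideanSpace ℝ (Fin d)) ∈ t := by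
    have : (0 : span ℤ (Set.range b)) ∈ (Subtype.val ⁻¹' t) := by rw [hpre]; rfl
    exact this
  obtain ⟨ε, hε, hball⟩ := Metric.isOpen_iff.1 ht 0 h0t
  refine ⟨ε, hε, fun x hx hxε => ?_⟩
  have : (⟨x, hx⟩ : span ℤ (Set.range b)) ∈ Subtype.val ⁻¹' t := by
    apply hball
    simpa [Metric.mem_ball, dist_zero_right] using hxε
  rw [hpre] at this
  simpa using this

theorem stmt4 (d : ℕ) (b : Module.Basis (Fin d) ℝ (EuclideanSpace ℝ (Fin d)))
    (Λ : Set (EuclideanSpace ℝ (Fin d)))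
    (hΛ : Λ = {x | ∃ c : Fin d → ℤ, x = ∑ i, (c i : ℝ) • b i})
    (Ω : Set (EuclideanSpace ℝ (Fin d)))
    (hΩ : Ω = {ω | ∀ l ∈ Λ, ‖ω‖ ≤ ‖ω - l‖})
    (ρ : ℝ) (hρ : ρ = sInf {s : ℝ | ∃ l ∈ Λ, l ≠ 0 ∧ s = ‖l‖ / 2})
    (R : ℝ) (hR : R = sSup {s : ℝ | ∃ ω ∈ Ω, s = ‖ω‖})
    (ω₀ : ℝ) (hω₀ : 0 < ω₀)
    (Δ : Set (EuclideanSpace ℝ (Fin d)))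
    (hΔ : Δ = Metric.closedBall 0 ω₀) :
    volume (Δ \ Ω) = max 0 (volume Δ - volume Ω) ↔ (ω₀ ≤ ρ ∨ ω₀ ≥ R) := by
  have hΛ' : Λ = (span ℤ (Set.range b) : Set _) := by
    rw [hΛ]; ext x
    rw [SetLike.mem_coe, mem_span_range_iff_exists_fun]
    constructor
    · rintro ⟨c, rfl⟩; exact ⟨c, by simp [Int.cast_smul_eq_zsmul]⟩
    · rintro ⟨c, rfl⟩; exact ⟨c, by simp [Int.cast_smul_eq_zsmul]⟩
  have h0Ω : (0 : EuclideanSpace ℝ (Fin d)) ∈ Ω := by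
    rw [hΩ]; intro l hl; simp
  have hΩclosed : IsClosed Ω := by
    rw [hΩ]
    have : {ω : EuclideanSpace ℝ (Fin d) | ∀ l ∈ Λ, ‖ω‖ ≤ ‖ω - l‖}
        = ⋂ l ∈ Λ, {ω | ‖ω‖ ≤ ‖ω - l‖} := by ext; simp
    rw [this]
    refine isClosed_biInter fun l _ => isClosed_le continuous_norm ?_
    exact (continuous_id.sub continuous_const).norm
  have hΩconv : Convex ℝ Ω := by
    rw [hΩ]
    intro x hx y hy a c ha hc hac
    intro l hl
    have hx' := (voronoi_halfspace_iff x l).1 (hx l hl)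
    have hy' := (voronoi_halfspace_iff y l).1 (hy l hl)
    show ‖a • x + c • y‖ ≤ ‖a • x + c • y - l‖
    rw [voronoi_halfspace_iff, inner_add_left, real_inner_smul_left, real_inner_smul_left]
    nlinarith [hx', hy']
  have hbddB : BddBelow {s : ℝ | ∃ l ∈ Λ, l ≠ 0 ∧ s = ‖l‖ / 2} := by
    refine ⟨0, ?_⟩; rintro s ⟨l, _, _, rfl⟩; positivity
  have hballΩ : ∀ x : EuclideanSpace ℝ (Fin d), ‖x‖ ≤ ρ → x ∈ Ω := by
    intro x hx
    rw [hΩ]; intro l hl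
    by_cases h0 : l = 0
    · simp [h0]
    · have h1 : ρ ≤ ‖l‖ / 2 := hρ ▸ csInf_le hbddB ⟨l, hl, h0, rfl⟩
      have h2 : ‖l‖ - ‖x‖ ≤ ‖x - l‖ := by
        rw [norm_sub_rev]; exact norm_sub_norm_le l x
      linarith
  obtain ⟨C, hC⟩ : ∃ C : ℝ, ∀ ω ∈ Ω, ‖ω‖ ≤ C := by
    obtain ⟨C, hC⟩ := (ZSpan.fundamentalDomain_isBounded b).subset_closedBall 0
    refine ⟨C, fun ω hω => ?_⟩
    have hm : ((ZSpan.floor b ω : _) : EuclideanSpace ℝ (Fin d)) ∈ Λ := by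
      rw [hΛ']; exact SetLike.coe_mem _
    rw [hΩ] at hω
    have h1 := hω _ hm
    rw [← ZSpan.fract_apply] at h1
    have h2 := hC (ZSpan.fract_mem_fundamentalDomain b ω)
    rw [Metric.mem_closedBall, dist_zero_right] at h2
    linarith
  have hSR_ne : {s : ℝ | ∃ ω ∈ Ω, s = ‖ω‖}.Nonempty :=
    ⟨‖(0 : EuclideanSpace ℝ (Fin d))‖, 0, h0Ω, rfl⟩
  have hSR_bdd : BddAbove {s : ℝ | ∃ ω ∈ Ω, s = ‖ω‖} :=
    ⟨C, by rintro s ⟨ω, hω, rfl⟩; exact hC ω hω⟩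
  have hΩR : ∀ ω ∈ Ω, ‖ω‖ ≤ R := fun ω hω => hR ▸ le_csSup hSR_bdd ⟨ω, hω, rfl⟩
  have hΩfin : volume Ω ≠ ⊤ := by
    refine ne_top_of_le_ne_top
      (measure_closedBall_lt_top (x := (0 : EuclideanSpace ℝ (Fin d))) (r := C)).ne
      (measure_mono ?_)
    intro ω hω; rw [Metric.mem_closedBall, dist_zero_right]; exact hC ω hω
  have hΔmeas : MeasurableSet Δ := hΔ ▸ measurableSet_closedBall
  have hΔfin : volume Δ ≠ ⊤ := by rw [hΔ]; exact measure_closedBall_lt_top.ne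
  rw [max_eq_right zero_le]
  constructor
  · intro h
    by_contra hcon
    push_neg at hcon
    obtain ⟨h1, h2⟩ := hcon
    rw [hR] at h2
    obtain ⟨s, ⟨ω, hωΩ, rfl⟩, hs⟩ := exists_lt_of_lt_csSup hSR_ne h2
    -- a nonzero lattice vector exists
    have hdpos : 0 < d := by
      by_contra hd
      push_neg at hd
      have hde : d = 0 := Nat.le_zero.mp hd
      have hie : IsEmpty (Fin d) := ⟨fun i => absurd i.2 (by omega)⟩
      have hss : Subsingleton (EuclideanSpace ℝ (Fin d)) := by
        exact ⟨fun x y => by ext i; exact isEmptyElim i⟩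
      have : ω = 0 := Subsingleton.elim _ _
      rw [this, norm_zero] at hs
      linarith
    have hl₀Λ : b ⟨0, hdpos⟩ ∈ Λ := by
      rw [hΛ']; exact subset_span ⟨_, rfl⟩
    have hSρ_ne : {s : ℝ | ∃ l ∈ Λ, l ≠ 0 ∧ s = ‖l‖ / 2}.Nonempty :=
      ⟨_, _, hl₀Λ, b.ne_zero _, rfl⟩
    have hρpos : 0 < ρ := by
      obtain ⟨ε, hε, hdisc⟩ := lattice_discrete d b
      rw [hρ]
      refine lt_of_lt_of_le (half_pos hε) (le_csInf hSρ_ne ?_)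
      rintro s ⟨l, hl, hlne, rfl⟩
      have hεl : ε ≤ ‖l‖ := by
        by_contra hc
        push_neg at hc
        rw [hΛ'] at hl
        exact hlne (hdisc l hl hc)
      linarith
    -- vol (Δ \ Ω) > 0
    have hpos1 : 0 < volume (Δ \ Ω) := by
      have h1' := h1
      rw [hρ] at h1'
      obtain ⟨s, ⟨l, hlΛ, hlne, rfl⟩, hs'⟩ := exists_lt_of_csInf_lt hSρ_ne h1'
      have hlpos : 0 < ‖l‖ := norm_pos_iff.mpr hlne
      set u := ω₀ / ‖l‖ with hu
      have hu2 : 1/2 < u := by rw [hu, lt_div_iff₀ hlpos]; linarith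
      set t := (1/2 + min u 1) / 2 with ht
      have hmin : 1/2 < min u 1 := lt_min hu2 (by norm_num)
      have htlb : 1/2 < t := by rw [ht]; linarith
      have htub1 : t < 1 := by have := min_le_right u 1; rw [ht]; linarith
      have htubu : t < u := by have := min_le_left u 1; rw [ht]; linarith
      have hxnorm : ‖t • l‖ = t * ‖l‖ := by
        rw [norm_smul, Real.norm_eq_abs, abs_of_pos (by linarith)]
      have hxlt : ‖t • l‖ < ω₀ := by
        rw [hxnorm]
        calc t * ‖l‖ < u * ‖l‖ := by nlinarith
          _ = ω₀ := by rw [hu]; field_simp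
      have hxnotΩ : t • l ∉ Ω := by
        rw [hΩ]
        intro hmem
        have hle := hmem l hlΛ
        have hsub : t • l - l = (t - 1) • l := by rw [sub_smul, one_smul]
        have hr : ‖t • l - l‖ = (1 - t) * ‖l‖ := by
          rw [hsub, norm_smul, Real.norm_eq_abs, abs_of_neg (by linarith : t - 1 < 0)]
          ring
        rw [hxnorm, hr] at hle
        nlinarith
      have hopen : IsOpen (Metric.ball (0 : EuclideanSpace ℝ (Fin d)) ω₀ ∩ Ωᶜ) :=
        Metric.isOpen_ball.inter hΩclosed.isOpen_compl
      have hne : (Metric.ball (0 : EuclideanSpace ℝ (Fin d)) ω₀ ∩ Ωᶜ).Nonempty :=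
        ⟨t • l, by rw [Metric.mem_ball, dist_zero_right]; exact hxlt, hxnotΩ⟩
      refine lt_of_lt_of_le (hopen.measure_pos volume hne) (measure_mono ?_)
      rintro x ⟨hx1, hx2⟩
      exact ⟨by rw [hΔ]; exact Metric.ball_subset_closedBall hx1, hx2⟩
    -- vol (Ω \ Δ) > 0
    have hpos2 : 0 < volume (Ω \ Δ) := by
      have h0int : (0 : EuclideanSpace ℝ (Fin d)) ∈ interior Ω := by
        have hsub : Metric.ball (0 : EuclideanSpace ℝ (Fin d)) ρ ⊆ Ω := fun x hx =>
          hballΩ x (le_of_lt (by rwa [Metric.mem_ball, dist_zero_right] at hx))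
        exact interior_maximal hsub Metric.isOpen_ball (Metric.mem_ball_self hρpos)
      have hωpos : 0 < ‖ω‖ := lt_trans hω₀ hs
      set t := (ω₀ / ‖ω‖ + 1) / 2 with ht
      have h1t : ω₀ / ‖ω‖ < 1 := (div_lt_one hωpos).mpr hs
      have htlb : ω₀ / ‖ω‖ < t := by rw [ht]; linarith
      have htub : t < 1 := by rw [ht]; linarith
      have htpos : 0 < t := lt_of_le_of_lt (by positivity) htlb
      have hz : (1 - t) • (0 : EuclideanSpace ℝ (Fin d)) + t • ω ∈ interior Ω :=
        hΩconv.combo_interior_self_mem_interior h0int hωΩ (by linarith) (le_of_lt htpos)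
          (by ring)
      rw [smul_zero, zero_add] at hz
      have hznorm : ω₀ < ‖t • ω‖ := by
        rw [norm_smul, Real.norm_eq_abs, abs_of_pos htpos]
        calc ω₀ = (ω₀ / ‖ω‖) * ‖ω‖ := by field_simp
          _ < t * ‖ω‖ := by nlinarith
      have hopen : IsOpen (interior Ω ∩ (Metric.closedBall (0 : EuclideanSpace ℝ (Fin d)) ω₀)ᶜ) :=
        isOpen_interior.inter Metric.isClosed_closedBall.isOpen_compl
      have hne : (interior Ω ∩ (Metric.closedBall (0 : EuclideanSpace ℝ (Fin d)) ω₀)ᶜ).Nonempty :=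
        ⟨t • ω, hz, by
          rw [mem_compl_iff, Metric.mem_closedBall, dist_zero_right]
          exact not_le.mpr hznorm⟩
      refine lt_of_lt_of_le (hopen.measure_pos volume hne) (measure_mono ?_)
      rintro x ⟨hx1, hx2⟩
      exact ⟨interior_subset hx1, by rw [hΔ]; exact hx2⟩
    -- measure arithmetic contradiction
    have e1 : volume (Δ ∩ Ω) + volume (Δ \ Ω) = volume Δ :=
      measure_inter_add_diff Δ hΩclosed.measurableSet
    have e2 : volume (Δ ∩ Ω) + volume (Ω \ Δ) = volume Ω := by
      rw [Set.inter_comm]; exact measure_inter_add_diff Ω hΔmeas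
    by_cases hcase : volume Ω ≤ volume Δ
    · have h3 : volume (Δ \ Ω) + (volume (Δ ∩ Ω) + volume (Ω \ Δ))
          = volume (Δ ∩ Ω) + volume (Δ \ Ω) := by
        rw [e2, e1, h]
        exact tsub_add_cancel_of_le hcase
      have h4 : (volume (Δ ∩ Ω) + volume (Δ \ Ω)) + volume (Ω \ Δ)
          = (volume (Δ ∩ Ω) + volume (Δ \ Ω)) + 0 := by
        rw [add_zero]
        conv_rhs => rw [← h3]
        ring
      have hfin : volume (Δ ∩ Ω) + volume (Δ \ Ω) ≠ ⊤ := by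
        rw [e1]; exact hΔfin
      have h5 := (ENNReal.add_right_inj hfin).mp h4
      exact absurd h5 (ne_of_gt hpos2)
    · push_neg at hcase
      have hz : volume (Δ \ Ω) = 0 := by
        rw [h]; exact tsub_eq_zero_of_le (le_of_lt hcase)
      exact absurd hz (ne_of_gt hpos1)
  · rintro (h | h)
    · have hsub : Δ ⊆ Ω := by
        rw [hΔ]; intro x hx
        rw [Metric.mem_closedBall, dist_zero_right] at hx
        exact hballΩ x (le_trans hx h)
      rw [Set.diff_eq_empty.mpr hsub, measure_empty, tsub_eq_zero_of_le (measure_mono hsub)]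
    · have hsub : Ω ⊆ Δ := by
        intro x hx
        rw [hΔ, Metric.mem_closedBall, dist_zero_right]
        exact le_trans (hΩR x hx) h
      rw [measure_diff hsub hΩclosed.measurableSet.nullMeasurableSet hΩfin]
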